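/- Let ρ be a d×d density matrix and let b_{ii} = (√ρ)_{ii} denote the diagonal entries of its positive semidefinite square root. Then for every λ ≥ 0 and every d×d diagonal density matrix δ, one has ‖√ρ − √(λδ)‖_HS² = 1 + λ − 2 Σ_i b_{ii} √(λ x_i) ≥ 1 − Σ_i b_{ii}², where x_i are the diagonal entries of δ; moreover equality is attained by choosing λ = Σ_i b_{ii}² and x_i = b_{ii}²/Σ_j b_{jj}² (when Σ_j b_{jj}² > 0). In particular inf_{λ ≥ 0, δ diagonal density matrix} ‖√ρ − √(λδ)‖_HS² = 1 − Σ_i b_{ii}². -/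

import Mathlib

open Matrix
open scoped ComplexOrder

/-- The positive semidefinite square root of a positive semidefinite matrix
(the definition removed from Mathlib, restored with its old meaning). -/
noncomputable def Matrix.PosSemidef.sqrt {n : Type*} [Fintype n] [DecidableEq n] {𝕜 : Type*}
    [RCLike 𝕜] {A : Matrix n n 𝕜} (hA : A.PosSemidef) : Matrix n n 𝕜 :=
  hA.1.eigenvectorUnitary.1 * diagonal ((↑) ∘ (√·) ∘ hA.1.eigenvalues) *
  (star hA.1.eigenvectorUnitary : Matrix n n 𝕜)

/-- The trace norm of a matrix `A`: `‖A‖_tr = Tr √(AᴴA)`. -/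
noncomputable def traceNorm {d : ℕ} (A : Matrix (Fin d) (Fin d) ℂ) : ℝ :=
  ((Matrix.posSemidef_conjTranspose_mul_self A).sqrt.trace).re

/-- The Hilbert–Schmidt norm of a matrix `A`: `‖A‖_HS = √(Tr(AᴴA))`. -/
noncomputable def hsNorm {d : ℕ} (A : Matrix (Fin d) (Fin d) ℂ) : ℝ :=
  Real.sqrt (((Aᴴ * A).trace).re)

open scoped MatrixOrder in
lemma Matrix.PosSemidef.sqrt_eq_cfc' {d : ℕ} {A : Matrix (Fin d) (Fin d) ℂ} (hA : A.PosSemidef) :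
    hA.sqrt = CFC.sqrt A := by
  have h0 : (0 : Matrix (Fin d) (Fin d) ℂ) ≤ A := Matrix.nonneg_iff_posSemidef.mpr hA
  rw [CFC.sqrt_eq_real_sqrt A h0, cfcₙ_eq_cfc, hA.1.cfc_eq, Matrix.IsHermitian.cfc,
    Unitary.conjStarAlgAut_apply]
  rfl

open scoped MatrixOrder in
lemma Matrix.PosSemidef.posSemidef_sqrt {d : ℕ} {A : Matrix (Fin d) (Fin d) ℂ}
    (hA : A.PosSemidef) : hA.sqrt.PosSemidef := by
  rw [hA.sqrt_eq_cfc']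
  exact Matrix.nonneg_iff_posSemidef.mp (CFC.sqrt_nonneg _)

open scoped MatrixOrder in
lemma Matrix.PosSemidef.sqrt_mul_self {d : ℕ} {A : Matrix (Fin d) (Fin d) ℂ}
    (hA : A.PosSemidef) : hA.sqrt * hA.sqrt = A := by
  rw [hA.sqrt_eq_cfc']
  exact CFC.sqrt_mul_sqrt_self A (Matrix.nonneg_iff_posSemidef.mpr hA)

open scoped MatrixOrder in
lemma Matrix.PosSemidef.eq_sqrt_of_sq_eq {d : ℕ} {A : Matrix (Fin d) (Fin d) ℂ}
    (hA : A.PosSemidef) (B : Matrix (Fin d) (Fin d) ℂ) (hB : B.PosSemidef) (h : B ^ 2 = A) :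
    B = hA.sqrt := by
  rw [hA.sqrt_eq_cfc']
  exact (CFC.sqrt_unique (by rw [← sq]; exact h) (Matrix.nonneg_iff_posSemidef.mpr hB)).symm

variable {d : ℕ}

lemma psd_diag_nonneg {A : Matrix (Fin d) (Fin d) ℂ} (hA : A.PosSemidef) (i : Fin d) :
    0 ≤ A i i := by
  exact hA.diag_nonneg

lemma psd_diag_re {A : Matrix (Fin d) (Fin d) ℂ} (hA : A.PosSemidef) (i : Fin d) :
    ((A i i).re : ℂ) = A i i := hA.1.coe_re_apply_self i

lemma sqrt_smul_diag {l : ℝ} (hl : 0 ≤ l) {δ : Matrix (Fin d) (Fin d) ℂ}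
    (hδ : δ.PosSemidef) (hdiag : δ.IsDiag) (hlδ : (l • δ).PosSemidef) :
    hlδ.sqrt = Matrix.diagonal (fun i => (Real.sqrt (l * (δ i i).re) : ℂ)) := by
  symm
  apply Matrix.PosSemidef.eq_sqrt_of_sq_eq
  · exact Matrix.posSemidef_diagonal_iff.mpr fun i => by
      rw [Complex.nonneg_iff]; simp [Real.sqrt_nonneg]
  · have hδeq : δ = Matrix.diagonal (fun i => ((δ i i).re : ℂ)) := by
      ext i j
      rcases eq_or_ne i j with rfl | hij
      · rw [Matrix.diagonal_apply_eq]; exact (psd_diag_re hδ i).symm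
      · rw [Matrix.diagonal_apply_ne _ hij]; exact hdiag hij
    rw [pow_two, diagonal_mul_diagonal]
    conv_rhs => rw [hδeq, ← Matrix.diagonal_smul]
    rw [Matrix.diagonal_eq_diagonal_iff]
    intro i
    have h1 : 0 ≤ (δ i i).re := ((Complex.nonneg_iff).mp (psd_diag_nonneg hδ i)).1
    rw [← Complex.ofReal_mul, Real.mul_self_sqrt (by positivity)]
    simp [Pi.smul_apply, Complex.real_smul]

lemma psd_trace_re_nonneg {A : Matrix (Fin d) (Fin d) ℂ} (hA : A.PosSemidef) :
    0 ≤ A.trace.re := by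
  rw [Matrix.trace, Complex.re_sum]
  exact Finset.sum_nonneg fun i _ =>
    ((Complex.nonneg_iff).mp (psd_diag_nonneg hA i)).1

lemma hsNorm_sq (X : Matrix (Fin d) (Fin d) ℂ) :
    hsNorm X ^ 2 = ((Xᴴ * X).trace).re :=
  Real.sq_sqrt (psd_trace_re_nonneg (Matrix.posSemidef_conjTranspose_mul_self X))

lemma key {ρ : Matrix (Fin d) (Fin d) ℂ} (hρ : ρ.PosSemidef) (v : Fin d → ℝ) :
    hsNorm (hρ.sqrt - Matrix.diagonal (fun i => (v i : ℂ))) ^ 2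
      = ρ.trace.re + ∑ i, (v i) ^ 2 - 2 * ∑ i, (hρ.sqrt i i).re * v i := by
  set A := hρ.sqrt with hA
  set D := Matrix.diagonal (fun i => (v i : ℂ)) with hD
  have hAH : Aᴴ = A := hρ.posSemidef_sqrt.1
  have hDH : Dᴴ = D := by
    rw [hD, Matrix.diagonal_conjTranspose, Matrix.diagonal_eq_diagonal_iff]
    intro i
    simp [Complex.star_def, Complex.conj_ofReal]
  rw [hsNorm_sq, Matrix.conjTranspose_sub, hAH, hDH, sub_mul, mul_sub, mul_sub,
    Matrix.trace_sub, Matrix.trace_sub, Matrix.trace_sub]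
  have h1 : A * A = ρ := hρ.sqrt_mul_self
  have h2 : (A * D).trace = ∑ i, A i i * (v i : ℂ) := by
    simp [Matrix.trace, Matrix.diag, Matrix.mul_diagonal, hD]
  have h3 : (D * A).trace = ∑ i, (v i : ℂ) * A i i := by
    simp [Matrix.trace, Matrix.diag, Matrix.diagonal_mul, hD]
  have h4 : (D * D).trace = ∑ i, ((v i : ℂ) * (v i : ℂ)) := by
    simp [hD, Matrix.diagonal_mul_diagonal, Matrix.trace_diagonal]
  rw [h1, h2, h3, h4]
  simp only [Complex.sub_re, Complex.add_re, Complex.re_sum, Complex.mul_re,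
    Complex.ofReal_re, Complex.ofReal_im, mul_zero, zero_mul, sub_zero]
  have e1 : ∑ x, v x * (A x x).re = ∑ x, (A x x).re * v x :=
    Finset.sum_congr rfl fun x _ => mul_comm _ _
  have e2 : ∑ x : Fin d, v x * v x = ∑ x, v x ^ 2 :=
    Finset.sum_congr rfl fun x _ => (sq (v x)).symm
  rw [e1, e2]
  ring

/-- For a density matrix `ρ` with `b i = (√ρ)_{ii}`: for every `λ ≥ 0` and diagonal
density matrix `δ` (with diagonal entries `x_i`),
`‖√ρ − √(λδ)‖_HS² = 1 + λ − 2 Σ_i b_i √(λ x_i) ≥ 1 − Σ_i b_i²`; equality is attained at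
`λ = Σ_i b_i²`, `x_i = b_i²/Σ_j b_j²` (when `Σ_j b_j² > 0`); and so the infimum over
all `λ ≥ 0` and diagonal density matrices `δ` of `‖√ρ − √(λδ)‖_HS²` equals `1 − Σ_i b_i²`. -/
theorem hsNorm_sqrt_sub_sqrt_smul_diag {d : ℕ}
    (ρ : Matrix (Fin d) (Fin d) ℂ) (hρ : ρ.PosSemidef) (hρtr : ρ.trace = 1)
    (b : Fin d → ℝ) (hb : ∀ i, b i = (hρ.sqrt i i).re) :
    (∀ (l : ℝ), 0 ≤ l → ∀ (δ : Matrix (Fin d) (Fin d) ℂ), δ.PosSemidef →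
      δ.trace = 1 → δ.IsDiag → ∀ (hlδ : (l • δ).PosSemidef),
      hsNorm (hρ.sqrt - hlδ.sqrt) ^ 2
          = 1 + l - 2 * ∑ i, b i * Real.sqrt (l * ((δ i i).re)) ∧
      1 + l - 2 * ∑ i, b i * Real.sqrt (l * ((δ i i).re)) ≥ 1 - ∑ i, (b i) ^ 2) ∧
    (0 < ∑ i, (b i) ^ 2 →
      ∀ (h : (((∑ i, (b i) ^ 2 : ℝ)) •
          (Matrix.diagonal fun i => (((b i) ^ 2 / ∑ j, (b j) ^ 2 : ℝ) : ℂ))).PosSemidef),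
        hsNorm (hρ.sqrt - h.sqrt) ^ 2 = 1 - ∑ i, (b i) ^ 2) ∧
    sInf {x : ℝ | ∃ (l : ℝ) (δ : Matrix (Fin d) (Fin d) ℂ) (_ : δ.PosSemidef)
          (hlδ : (l • δ).PosSemidef),
        0 ≤ l ∧ δ.trace = 1 ∧ δ.IsDiag ∧ x = hsNorm (hρ.sqrt - hlδ.sqrt) ^ 2}
      = 1 - ∑ i, (b i) ^ 2 := by
  set B : ℝ := ∑ i, (b i) ^ 2 with hB
  have hρre : ρ.trace.re = 1 := by rw [hρtr]; simp
  have hbnn : ∀ i, 0 ≤ b i := fun i => by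
    rw [hb i]
    exact ((Complex.nonneg_iff).mp (psd_diag_nonneg hρ.posSemidef_sqrt i)).1
  have hB0 : 0 ≤ B := Finset.sum_nonneg fun i _ => sq_nonneg _
  -- Part 1
  have P1 : ∀ (l : ℝ), 0 ≤ l → ∀ (δ : Matrix (Fin d) (Fin d) ℂ), δ.PosSemidef →
      δ.trace = 1 → δ.IsDiag → ∀ (hlδ : (l • δ).PosSemidef),
      hsNorm (hρ.sqrt - hlδ.sqrt) ^ 2
          = 1 + l - 2 * ∑ i, b i * Real.sqrt (l * ((δ i i).re)) ∧
      1 + l - 2 * ∑ i, b i * Real.sqrt (l * ((δ i i).re)) ≥ 1 - B := by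
    intro l hl δ hδ hδtr hδdiag hlδ
    have hx : ∀ i, 0 ≤ (δ i i).re := fun i =>
      ((Complex.nonneg_iff).mp (psd_diag_nonneg hδ i)).1
    have hsum : ∑ i, (δ i i).re = 1 := by
      have := congrArg Complex.re hδtr
      simpa [Matrix.trace, Matrix.diag, Complex.re_sum] using this
    set v : Fin d → ℝ := fun i => Real.sqrt (l * (δ i i).re) with hv
    have hv2 : ∑ i, v i ^ 2 = l := by
      have : ∀ i : Fin d, v i ^ 2 = l * (δ i i).re := fun i =>
        Real.sq_sqrt (mul_nonneg hl (hx i))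
      simp only [this]
      rw [← Finset.mul_sum, hsum, mul_one]
    have heq : hsNorm (hρ.sqrt - hlδ.sqrt) ^ 2 = 1 + l - 2 * ∑ i, b i * v i := by
      rw [sqrt_smul_diag hl hδ hδdiag hlδ, key hρ v, hρre, hv2]
      congr 2
      exact Finset.sum_congr rfl fun i _ => by rw [hb i]
    refine ⟨heq, ?_⟩
    have hS0 : 0 ≤ ∑ i, b i * v i :=
      Finset.sum_nonneg fun i _ => mul_nonneg (hbnn i) (Real.sqrt_nonneg _)
    have CS : (∑ i, b i * v i) ^ 2 ≤ B * l := by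
      calc (∑ i, b i * v i) ^ 2 ≤ (∑ i, b i ^ 2) * (∑ i, v i ^ 2) :=
            Finset.sum_mul_sq_le_sq_mul_sq _ _ _
        _ = B * l := by rw [← hB, hv2]
    nlinarith [sq_nonneg (l - B), sq_nonneg (l + B - 2 * ∑ i, b i * v i)]
  -- Part 2 as a have
  have P2 : 0 < B →
      ∀ (h : ((B : ℝ) •
          (Matrix.diagonal fun i => (((b i) ^ 2 / B : ℝ) : ℂ))).PosSemidef),
        hsNorm (hρ.sqrt - h.sqrt) ^ 2 = 1 - B := by
    intro hBpos h
    have hδpsd : (Matrix.diagonal fun i => (((b i) ^ 2 / B : ℝ) : ℂ)).PosSemidef :=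
      Matrix.posSemidef_diagonal_iff.mpr fun i =>
        Complex.zero_le_real.mpr (div_nonneg (sq_nonneg _) hB0)
    have htr' : ∑ i, (b i) ^ 2 / B = 1 := by
      rw [← Finset.sum_div, ← hB, div_self hBpos.ne']
    have hδtr : (Matrix.diagonal fun i => (((b i) ^ 2 / B : ℝ) : ℂ)).trace = 1 := by
      rw [Matrix.trace_diagonal]
      exact_mod_cast htr'
    have := (P1 B hB0 _ hδpsd hδtr (Matrix.isDiag_diagonal _) h).1
    rw [this]
    have e1 : ∀ i : Fin d, Real.sqrt (B * (((Matrix.diagonal fun i =>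
        (((b i) ^ 2 / B : ℝ) : ℂ)) i i).re)) = b i := by
      intro i
      rw [Matrix.diagonal_apply_eq, Complex.ofReal_re,
        mul_div_cancel₀ _ hBpos.ne', Real.sqrt_sq (hbnn i)]
    simp only [e1]
    have e2 : ∑ i, b i * b i = B := by
      rw [hB]; exact Finset.sum_congr rfl fun i _ => (sq (b i)).symm
    rw [e2]; ring
  refine ⟨P1, P2, ?_⟩
  -- Part 3
  have hmem : (1 - B) ∈ {x : ℝ | ∃ (l : ℝ) (δ : Matrix (Fin d) (Fin d) ℂ)
      (_ : δ.PosSemidef) (hlδ : (l • δ).PosSemidef),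
      0 ≤ l ∧ δ.trace = 1 ∧ δ.IsDiag ∧ x = hsNorm (hρ.sqrt - hlδ.sqrt) ^ 2} := by
    rcases Nat.eq_zero_or_pos d with hd | hd
    · exfalso
      subst hd
      have : ρ.trace = 0 := by simp [Matrix.trace]
      rw [this] at hρtr
      exact one_ne_zero hρtr.symm
    rcases eq_or_lt_of_le hB0 with hB0' | hBpos
    · -- B = 0 : l = 0, δ = (1/d) • I
      have hpsd : (Matrix.diagonal fun _ : Fin d => (Complex.ofReal (d : ℝ)⁻¹)).PosSemidef :=
        Matrix.posSemidef_diagonal_iff.mpr fun i =>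
          Complex.zero_le_real.mpr (by positivity)
      have htr : (Matrix.diagonal fun _ : Fin d => (Complex.ofReal (d : ℝ)⁻¹)).trace = 1 := by
        have hd' : (d : ℝ) ≠ 0 := Nat.cast_ne_zero.mpr hd.ne'
        have : ∑ _i : Fin d, (d : ℝ)⁻¹ = 1 := by
          rw [Finset.sum_const, Finset.card_univ, Fintype.card_fin, nsmul_eq_mul,
            mul_inv_cancel₀ hd']
        rw [Matrix.trace_diagonal]
        exact_mod_cast this
      have hz : ((0 : ℝ) • (Matrix.diagonal fun _ : Fin d =>
          (Complex.ofReal (d : ℝ)⁻¹))).PosSemidef := by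
        rw [zero_smul]; exact Matrix.PosSemidef.zero
      refine ⟨0, _, hpsd, hz, le_refl 0, htr, Matrix.isDiag_diagonal _, ?_⟩
      rw [(P1 0 le_rfl _ hpsd htr (Matrix.isDiag_diagonal _) hz).1]
      simp [← hB0']
    · -- B > 0 : use the minimizer
      have hδpsd : (Matrix.diagonal fun i => (((b i) ^ 2 / B : ℝ) : ℂ)).PosSemidef :=
        Matrix.posSemidef_diagonal_iff.mpr fun i =>
          Complex.zero_le_real.mpr (div_nonneg (sq_nonneg _) hB0)
      have hδtr : (Matrix.diagonal fun i => (((b i) ^ 2 / B : ℝ) : ℂ)).trace = 1 := by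
        rw [Matrix.trace_diagonal]
        have : ∑ i, (b i) ^ 2 / B = 1 := by
          rw [← Finset.sum_div, ← hB, div_self hBpos.ne']
        exact_mod_cast this
      have hlδ : ((B : ℝ) •
          (Matrix.diagonal fun i => (((b i) ^ 2 / B : ℝ) : ℂ))).PosSemidef := by
        rw [← Matrix.diagonal_smul]
        refine Matrix.posSemidef_diagonal_iff.mpr fun i => ?_
        simp only [Pi.smul_apply, Complex.real_smul, ← Complex.ofReal_mul]
        exact Complex.zero_le_real.mpr (by positivity)
      exact ⟨B, _, hδpsd, hlδ, hB0, hδtr, Matrix.isDiag_diagonal _,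
        (P2 hBpos hlδ).symm⟩
  refine le_antisymm (csInf_le ⟨1 - B, ?_⟩ hmem) (le_csInf ⟨_, hmem⟩ ?_)
  · rintro x ⟨l, δ, hδ, hlδ, hl, hδtr, hδdiag, rfl⟩
    have := P1 l hl δ hδ hδtr hδdiag hlδ
    rw [this.1]
    exact this.2
  · rintro x ⟨l, δ, hδ, hlδ, hl, hδtr, hδdiag, rfl⟩
    have := P1 l hl δ hδ hδtr hδdiag hlδ
    rw [this.1]
    exact this.2
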